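/- arXiv:2502.16639 — 3 statements merged into one kernel-verified Lean document; each statement's English description precedes it below -/
import Mathlib

section
/- Let n > m > 1 be real, A > 0 and Δ > 0, and set a = 2AΔ/(1+Δ) and b = 2A/(1+Δ). Then the f_{nm}-energy per particle of the bipartite chain satisfies (1/2)·Σ_{j∈ℤ, j≠0} f_{nm}(2jA) + (1/4)·Σ_{j∈ℤ} ( f_{nm}(a+2jA) + f_{nm}(b+2jA) ) = (1/(n−m))·( m·U(n,A,Δ) − n·U(m,A,Δ) ), where U(s,A,Δ) = (2A)^{−s}·ζ(s) + (1/(2(2A)^s))·( ζ(s, Δ/(1+Δ)) + ζ(s, 1/(1+Δ)) ). -/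
open Real Filter

/-- The Riemann zeta function `ζ(s) = Σ_{j=1}^∞ j^{-s}` for real `s > 1`. -/
noncomputable def rzeta (s : ℝ) : ℝ := ∑' j : ℕ, ((j : ℝ) + 1) ^ (-s)

/-- The Hurwitz zeta function `ζ(s,q) = Σ_{j=0}^∞ (j+q)^{-s}` for real `s > 1`, `q > 0`. -/
noncomputable def hzeta (s q : ℝ) : ℝ := ∑' j : ℕ, ((j : ℝ) + q) ^ (-s)

/-- The Mie potential `f_{nm}(r) = (1/(n−m))·(m/|r|^n − n/|r|^m)` for `r ≠ 0`. -/
noncomputable def Mie (n m r : ℝ) : ℝ := (1 / (n - m)) * (m / |r| ^ n - n / |r| ^ m)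

/-- The Riesz energy per particle of the bipartite chain,
`U(s,A,Δ) = (2A)^{-s}·ζ(s) + (1/(2(2A)^s))·(ζ(s,Δ/(1+Δ)) + ζ(s,1/(1+Δ)))`. -/
noncomputable def U (s A Δ : ℝ) : ℝ :=
  (2 * A) ^ (-s) * rzeta s +
    (1 / (2 * (2 * A) ^ s)) * (hzeta s (Δ / (1 + Δ)) + hzeta s (1 / (1 + Δ)))

lemma hzeta_summable {s q : ℝ} (hs : 1 < s) (hq : 0 < q) :
    Summable (fun j : ℕ => ((j : ℝ) + q) ^ (-s)) := by
  have hbase : Summable (fun j : ℕ => ((j : ℝ) + 1) ^ (-s)) := by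
    have h0 := (Real.summable_nat_rpow (p := -s)).mpr (by linarith)
    rw [← summable_nat_add_iff 1] at h0
    simpa using h0
  rw [← summable_nat_add_iff 1]
  refine hbase.of_nonneg_of_le (fun j => Real.rpow_nonneg (by positivity) _) (fun j => ?_)
  refine Real.rpow_le_rpow_of_nonpos (by positivity) ?_ (by linarith)
  push_cast; linarith

lemma hzeta_hasSum {s q : ℝ} (hs : 1 < s) (hq : 0 < q) :
    HasSum (fun j : ℕ => ((j : ℝ) + q) ^ (-s)) (hzeta s q) :=
  (hzeta_summable hs hq).hasSum

lemma rzeta_eq (s : ℝ) : rzeta s = hzeta s 1 := rfl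

/-- The central-chain Riesz sum. -/
lemma hasSum_riesz_even {s A : ℝ} (hs : 1 < s) (hA : 0 < A) :
    HasSum (fun j : ℤ => |2 * (j : ℝ) * A| ^ (-s)) (2 * ((2 * A) ^ (-s) * rzeta s)) := by
  have h2A : (0:ℝ) < 2 * A := by linarith
  have key : HasSum (fun j : ℕ => |2 * A * ((j : ℝ) + 1)| ^ (-s)) ((2 * A) ^ (-s) * rzeta s) := by
    have h := (hzeta_hasSum hs one_pos).mul_left ((2 * A) ^ (-s))
    rw [rzeta_eq]
    convert h using 1
    rfl
    funext j
    rw [abs_of_pos (by positivity), Real.mul_rpow h2A.le (by positivity)]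
  rw [two_mul]
  apply HasSum.of_nat_of_neg_add_one
  · have key' : HasSum (fun j : ℕ => |2 * (((j + 1 : ℕ) : ℤ) : ℝ) * A| ^ (-s))
        ((2 * A) ^ (-s) * rzeta s) := by
      convert key using 1
      funext j
      congr 1
      push_cast
      ring
    have := (hasSum_nat_add_iff (f := fun n : ℕ => |2 * ((n : ℤ) : ℝ) * A| ^ (-s)) 1).mp key'
    simpa [Real.zero_rpow (show -s ≠ 0 by linarith)] using this
  · convert key using 1
    funext j
    congr 1
    push_cast
    rw [show (2 : ℝ) * -((j:ℝ) + 1) * A = -(2 * A * ((j:ℝ)+1)) by ring, abs_neg]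

/-- The shifted-chain Riesz sum. -/
lemma hasSum_riesz_shift {s A c : ℝ} (hs : 1 < s) (hA : 0 < A) (hc : 0 < c) (hc2 : c < 2 * A) :
    HasSum (fun j : ℤ => |c + 2 * (j : ℝ) * A| ^ (-s))
      ((2 * A) ^ (-s) * (hzeta s (c / (2 * A)) + hzeta s (1 - c / (2 * A)))) := by
  have h2A : (0:ℝ) < 2 * A := by linarith
  have hq1 : (0:ℝ) < c / (2 * A) := by positivity
  have hq2 : (0:ℝ) < 1 - c / (2 * A) := by
    have : c / (2 * A) < 1 := (div_lt_one h2A).mpr hc2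
    linarith
  rw [mul_add]
  apply HasSum.of_nat_of_neg_add_one
  · have h := (hzeta_hasSum hs hq1).mul_left ((2 * A) ^ (-s))
    convert h using 1
    rfl
    funext j
    have hpos : (0:ℝ) < c + 2 * ((j : ℤ) : ℝ) * A := by
      push_cast
      nlinarith [Nat.cast_nonneg (α := ℝ) j]
    have h1 : |c + 2 * ((j : ℤ) : ℝ) * A| = (2 * A) * ((j : ℝ) + c / (2 * A)) := by
      rw [abs_of_pos hpos]; push_cast; field_simp; ring
    rw [h1, Real.mul_rpow h2A.le (by positivity)]
  · have h := (hzeta_hasSum hs hq2).mul_left ((2 * A) ^ (-s))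
    convert h using 1
    rfl
    funext j
    have hneg : c + 2 * ((-(j + 1) : ℤ) : ℝ) * A < 0 := by
      push_cast
      nlinarith [Nat.cast_nonneg (α := ℝ) j]
    have h1 : |c + 2 * ((-(j + 1) : ℤ) : ℝ) * A| = (2 * A) * ((j : ℝ) + (1 - c / (2 * A))) := by
      rw [abs_of_neg hneg]; push_cast; field_simp; ring
    rw [h1, Real.mul_rpow h2A.le (by positivity)]

lemma Mie_eq (n m r : ℝ) : Mie n m r = (1 / (n - m)) * (m * |r| ^ (-n) - n * |r| ^ (-m)) := by
  unfold Mie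
  rw [Real.rpow_neg (abs_nonneg r), Real.rpow_neg (abs_nonneg r)]
  ring

lemma hasSum_mie_of (n m : ℝ) (f : ℤ → ℝ) (Sn Sm : ℝ)
    (h1 : HasSum (fun j => |f j| ^ (-n)) Sn) (h2 : HasSum (fun j => |f j| ^ (-m)) Sm) :
    HasSum (fun j => Mie n m (f j)) ((1 / (n - m)) * (m * Sn - n * Sm)) := by
  have h := ((h1.mul_left m).sub (h2.mul_left n)).mul_left (1 / (n - m))
  have heq : (fun j => Mie n m (f j))
      = (fun j => 1 / (n - m) * (m * |f j| ^ (-n) - n * |f j| ^ (-m))) := by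
    funext j; exact Mie_eq n m (f j)
  rw [heq]
  exact h

/-- For `n > m > 1`, `A > 0`, `Δ > 0` and spacings `a = 2AΔ/(1+Δ)`,
`b = 2A/(1+Δ)`, the `f_{nm}`-energy per particle of the bipartite chain equals
`(1/(n−m))·(m·U(n,A,Δ) − n·U(m,A,Δ))`. -/
theorem mie_energy_bipartite_chain
    (n m A Δ : ℝ) (hm : 1 < m) (hnm : m < n) (hA : 0 < A) (hΔ : 0 < Δ)
    (a b : ℝ) (ha : a = 2 * A * Δ / (1 + Δ)) (hb : b = 2 * A / (1 + Δ)) :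
    (1 / 2) * (∑' j : {j : ℤ // j ≠ 0}, Mie n m (2 * (j.1 : ℝ) * A)) +
      (1 / 4) * (∑' j : ℤ, (Mie n m (a + 2 * (j : ℝ) * A) + Mie n m (b + 2 * (j : ℝ) * A))) =
    (1 / (n - m)) * (m * U n A Δ - n * U m A Δ) := by
  have hn : 1 < n := hm.trans hnm
  have h2A : (0:ℝ) < 2 * A := by linarith
  have hΔ1 : (0:ℝ) < 1 + Δ := by linarith
  have ha0 : 0 < a := by rw [ha]; positivity
  have ha2 : a < 2 * A := by
    rw [ha, div_lt_iff₀ hΔ1]; nlinarith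
  have hb0 : 0 < b := by rw [hb]; positivity
  have hb2 : b < 2 * A := by
    rw [hb, div_lt_iff₀ hΔ1]; nlinarith
  have hqa : a / (2 * A) = Δ / (1 + Δ) := by
    rw [ha]; field_simp; try ring
  have hqa' : 1 - a / (2 * A) = 1 / (1 + Δ) := by
    rw [hqa]; field_simp; try ring
  have hqb : b / (2 * A) = 1 / (1 + Δ) := by
    rw [hb]; field_simp; try ring
  have hqb' : 1 - b / (2 * A) = Δ / (1 + Δ) := by
    rw [hqb]; field_simp; try ring
  -- the three Mie sums
  have E0 : HasSum (fun j : ℤ => Mie n m (2 * (j : ℝ) * A))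
      ((1 / (n - m)) * (m * (2 * ((2 * A) ^ (-n) * rzeta n))
        - n * (2 * ((2 * A) ^ (-m) * rzeta m)))) :=
    hasSum_mie_of n m _ _ _ (hasSum_riesz_even hn hA) (hasSum_riesz_even hm hA)
  have Ea : HasSum (fun j : ℤ => Mie n m (a + 2 * (j : ℝ) * A))
      ((1 / (n - m)) * (m * ((2 * A) ^ (-n) * (hzeta n (a / (2 * A)) + hzeta n (1 - a / (2 * A))))
        - n * ((2 * A) ^ (-m) * (hzeta m (a / (2 * A)) + hzeta m (1 - a / (2 * A)))))) :=
    hasSum_mie_of n m _ _ _ (hasSum_riesz_shift hn hA ha0 ha2) (hasSum_riesz_shift hm hA ha0 ha2)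
  have Eb : HasSum (fun j : ℤ => Mie n m (b + 2 * (j : ℝ) * A))
      ((1 / (n - m)) * (m * ((2 * A) ^ (-n) * (hzeta n (b / (2 * A)) + hzeta n (1 - b / (2 * A))))
        - n * ((2 * A) ^ (-m) * (hzeta m (b / (2 * A)) + hzeta m (1 - b / (2 * A)))))) :=
    hasSum_mie_of n m _ _ _ (hasSum_riesz_shift hn hA hb0 hb2) (hasSum_riesz_shift hm hA hb0 hb2)
  -- the subtype sum equals the full sum
  have hsub : (∑' j : {j : ℤ // j ≠ 0}, Mie n m (2 * (j.1 : ℝ) * A))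
      = ∑' j : ℤ, Mie n m (2 * (j : ℝ) * A) := by
    have hzero : Mie n m (2 * ((0 : ℤ) : ℝ) * A) = 0 := by
      simp [Mie, Real.zero_rpow (show n ≠ 0 by linarith), Real.zero_rpow (show m ≠ 0 by linarith)]
    have hsupp : Function.support (fun j : ℤ => Mie n m (2 * (j : ℝ) * A))
        ⊆ {j : ℤ | j ≠ 0} := by
      intro j hj
      simp only [Set.mem_setOf_eq]
      rintro rfl
      exact hj hzero
    exact tsum_subtype_eq_of_support_subset hsupp
  rw [hsub, E0.tsum_eq]
  have hsum2 : (∑' j : ℤ, (Mie n m (a + 2 * (j : ℝ) * A) + Mie n m (b + 2 * (j : ℝ) * A)))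
      = _ + _ := (Ea.add Eb).tsum_eq
  rw [hsum2]
  rw [hqa', hqa, hqb', hqb]
  unfold U
  rw [Real.rpow_neg h2A.le n, Real.rpow_neg h2A.le m]
  ring
end

section
/- Let m > 1 be fixed and A_c^{nm} = (1/2)·[ ((2^{2+n}−1)(1+n)ζ(n+2)) / ((2^{2+m}−1)(1+m)ζ(m+2)) ]^{1/(n−m)}. Then lim_{n→∞} A_c^{nm} = 1; in particular the hard-core limit of the critical inverse particle density is independent of m. -/
open Real Filter

lemma rzeta_summable {s : ℝ} (hs : 1 < s) :
    Summable (fun j : ℕ => ((j : ℝ) + 1) ^ (-s)) := by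
  have h : Summable (fun j : ℕ => ((j : ℝ)) ^ (-s)) :=
    Real.summable_nat_rpow.mpr (by linarith)
  have := (summable_nat_add_iff (f := fun j : ℕ => ((j : ℝ)) ^ (-s)) 1).mpr h
  refine this.congr fun j => ?_
  push_cast
  ring_nf

lemma one_le_rzeta {s : ℝ} (hs : 1 < s) : 1 ≤ rzeta s := by
  have h0 : ((0 : ℝ) + 1) ^ (-s) = 1 := by norm_num
  calc (1:ℝ) = ((0 : ℕ) : ℝ) + 1 ^ (-s) := by norm_num
    _ ≤ rzeta s := by
        rw [show (((0:ℕ):ℝ)) + 1 ^ (-s) = (((0:ℕ):ℝ) + 1) ^ (-s) by norm_num]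
        exact Summable.le_tsum (rzeta_summable hs) 0 fun j _ =>
          Real.rpow_nonneg (by positivity) _

lemma rzeta_anti {s t : ℝ} (hs : 1 < s) (hst : s ≤ t) : rzeta t ≤ rzeta s := by
  refine Summable.tsum_le_tsum (fun j => ?_) (rzeta_summable (lt_of_lt_of_le hs hst))
    (rzeta_summable hs)
  exact Real.rpow_le_rpow_of_exponent_le (by linarith [Nat.cast_nonneg (α := ℝ) j]) (by linarith)

lemma tendsto_sub_const_atTop (m : ℝ) : Tendsto (fun n : ℝ => n - m) atTop atTop :=
  tendsto_atTop_add_const_right _ (-m) tendsto_id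

lemma tendsto_inv_sub (m : ℝ) : Tendsto (fun n : ℝ => (n - m)⁻¹) atTop (nhds 0) :=
  tendsto_inv_atTop_zero.comp (tendsto_sub_const_atTop m)

lemma tendsto_ratio (m c : ℝ) :
    Tendsto (fun n : ℝ => (c + n) / (n - m)) atTop (nhds 1) := by
  have h : Tendsto (fun n : ℝ => 1 + (c + m) * (n - m)⁻¹) atTop (nhds 1) := by
    have := (tendsto_inv_sub m).const_mul (c + m)
    simpa using tendsto_const_nhds.add this
  refine h.congr' ?_
  filter_upwards [eventually_gt_atTop m] with n hn
  have hnm : n - m ≠ 0 := by linarith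
  field_simp
  ring

/-- For fixed `m > 1`, the transition point
`A_c^{nm} = (1/2)·[((2^{2+n}−1)(1+n)ζ(n+2)) / ((2^{2+m}−1)(1+m)ζ(m+2))]^{1/(n−m)}`
satisfies `lim_{n→∞} A_c^{nm} = 1` (an `m`-independent hard-core limit). -/
theorem Ac_tendsto_one_hardcore_limit
    (m : ℝ) (hm : 1 < m) :
    Tendsto
      (fun n : ℝ =>
        (1 / 2) * (((2 ^ (2 + n) - 1) * (1 + n) * rzeta (n + 2)) /
            ((2 ^ (2 + m) - 1) * (1 + m) * rzeta (m + 2))) ^ (1 / (n - m)))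
      atTop (nhds 1) := by
  set C : ℝ := (2 ^ (2 + m) - 1) * (1 + m) * rzeta (m + 2) with hCdef
  have h2m : (1:ℝ) < 2 ^ (2 + m) :=
    Real.one_lt_rpow_iff_of_pos (by norm_num) |>.mpr (Or.inl ⟨by norm_num, by linarith⟩)
  have hC : 0 < C := by
    have := one_le_rzeta (s := m + 2) (by linarith)
    have : (0:ℝ) < rzeta (m + 2) := by linarith
    have h1 : (0:ℝ) < 2 ^ (2 + m) - 1 := by linarith
    positivity
  -- positivity of the numerator, eventually
  have hnum : ∀ n : ℝ, 0 ≤ n → 0 < (2 ^ (2 + n) - 1) * (1 + n) * rzeta (n + 2) := by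
    intro n hn
    have h2n : (1:ℝ) < 2 ^ (2 + n) :=
      Real.one_lt_rpow_iff_of_pos (by norm_num) |>.mpr (Or.inl ⟨by norm_num, by linarith⟩)
    have hz : (0:ℝ) < rzeta (n + 2) := by
      have := one_le_rzeta (s := n + 2) (by linarith); linarith
    have h1 : (0:ℝ) < 2 ^ (2 + n) - 1 := by linarith
    have h2 : (0:ℝ) < 1 + n := by linarith
    positivity
  -- the log-limit
  have hlog : Tendsto (fun n : ℝ =>
      Real.log ((2 ^ (2 + n) - 1) * (1 + n) * rzeta (n + 2) / C) * (1 / (n - m)))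
      atTop (nhds (Real.log 2)) := by
    -- decompose log
    have hdecomp : (fun n : ℝ =>
        Real.log ((2 ^ (2 + n) - 1) * (1 + n) * rzeta (n + 2) / C) * (1 / (n - m))) =ᶠ[atTop] (fun n : ℝ =>
        Real.log (2 ^ (2 + n) - 1) / (n - m) + Real.log (1 + n) / (n - m)
          + Real.log (rzeta (n + 2)) / (n - m) - Real.log C / (n - m)) := by
      filter_upwards [eventually_ge_atTop (0:ℝ)] with n hn
      have h2n : (1:ℝ) < 2 ^ (2 + n) :=
        Real.one_lt_rpow_iff_of_pos (by norm_num) |>.mpr (Or.inl ⟨by norm_num, by linarith⟩)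
      have hz : (1:ℝ) ≤ rzeta (n + 2) := one_le_rzeta (by linarith)
      have e1 : (2:ℝ) ^ (2 + n) - 1 ≠ 0 := by linarith
      have e2 : (1:ℝ) + n ≠ 0 := by linarith
      have e3 : rzeta (n + 2) ≠ 0 := by linarith
      rw [Real.log_div (by positivity) (ne_of_gt hC), Real.log_mul (by positivity) e3,
        Real.log_mul e1 e2]
      ring
    rw [show Real.log 2 = Real.log 2 + 0 + 0 - 0 by ring]
    refine Tendsto.congr' hdecomp.symm ?_
    refine (((?_ : Tendsto (fun n : ℝ => Real.log (2 ^ (2+n) - 1) / (n - m)) atTop (nhds (Real.log 2))).add ?_).add ?_).sub ?_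
    · -- squeeze between (1+n)log2/(n-m) and (2+n)log2/(n-m)
      have hlo : Tendsto (fun n : ℝ => (1 + n) / (n - m) * Real.log 2) atTop (nhds (Real.log 2)) := by
        simpa using (tendsto_ratio m 1).mul_const (Real.log 2)
      have hhi : Tendsto (fun n : ℝ => (2 + n) / (n - m) * Real.log 2) atTop (nhds (Real.log 2)) := by
        simpa using (tendsto_ratio m 2).mul_const (Real.log 2)
      refine tendsto_of_tendsto_of_tendsto_of_le_of_le' hlo hhi ?_ ?_
      · filter_upwards [eventually_gt_atTop m, eventually_ge_atTop (0:ℝ)] with n hn hn0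
        have hnm : (0:ℝ) < n - m := by linarith
        have key : (2:ℝ) ^ (1 + n) ≤ 2 ^ (2 + n) - 1 := by
          have h1 : (2:ℝ) ^ (2 + n) = 2 * 2 ^ (1 + n) := by
            rw [show (2:ℝ) + n = 1 + (1 + n) by ring, Real.rpow_add (by norm_num), Real.rpow_one]
          have h2 : (1:ℝ) ≤ 2 ^ (1 + n) :=
            Real.one_le_rpow (by norm_num) (by linarith)
          linarith
        have hlog' : (1 + n) * Real.log 2 ≤ Real.log (2 ^ (2 + n) - 1) := by
          rw [← Real.log_rpow (by norm_num)]
          exact Real.log_le_log (by positivity) key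
        rw [div_mul_eq_mul_div]
        exact (div_le_div_iff_of_pos_right hnm).mpr hlog'
      · filter_upwards [eventually_gt_atTop m, eventually_ge_atTop (0:ℝ)] with n hn hn0
        have hnm : (0:ℝ) < n - m := by linarith
        have h2n : (1:ℝ) < 2 ^ (2 + n) :=
          Real.one_lt_rpow_iff_of_pos (by norm_num) |>.mpr (Or.inl ⟨by norm_num, by linarith⟩)
        have hlog' : Real.log (2 ^ (2 + n) - 1) ≤ (2 + n) * Real.log 2 := by
          rw [← Real.log_rpow (by norm_num : (0:ℝ) < 2)]
          exact Real.log_le_log (by linarith) (by linarith)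
        rw [div_mul_eq_mul_div]
        exact (div_le_div_iff_of_pos_right hnm).mpr hlog'
    · -- log(1+n)/(n-m) → 0
      have h1 : Tendsto (fun x : ℝ => Real.log x / x) atTop (nhds 0) :=
        Real.isLittleO_log_id_atTop.tendsto_div_nhds_zero
      have h2 : Tendsto (fun n : ℝ => Real.log (1 + n) / (1 + n)) atTop (nhds 0) :=
        h1.comp (tendsto_atTop_add_const_left _ 1 tendsto_id)
      have h3 := h2.mul (tendsto_ratio m 1)
      rw [zero_mul] at h3
      refine h3.congr' ?_
      filter_upwards [eventually_gt_atTop (0:ℝ)] with n hn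
      have : (1:ℝ) + n ≠ 0 := by linarith
      field_simp
    · -- log(rzeta(n+2))/(n-m) → 0
      have hconst : Tendsto (fun n : ℝ => Real.log (rzeta 3) * (n - m)⁻¹) atTop (nhds 0) := by
        simpa using (tendsto_inv_sub m).const_mul (Real.log (rzeta 3))
      refine tendsto_of_tendsto_of_tendsto_of_le_of_le' tendsto_const_nhds hconst ?_ ?_
      · filter_upwards [eventually_gt_atTop m, eventually_ge_atTop (1:ℝ)] with n hn hn1
        have hnm : (0:ℝ) < n - m := by linarith
        have hz : (1:ℝ) ≤ rzeta (n + 2) := one_le_rzeta (by linarith)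
        have : 0 ≤ Real.log (rzeta (n + 2)) := Real.log_nonneg hz
        positivity
      · filter_upwards [eventually_gt_atTop m, eventually_ge_atTop (1:ℝ)] with n hn hn1
        have hnm : (0:ℝ) < n - m := by linarith
        have hz : rzeta (n + 2) ≤ rzeta 3 := rzeta_anti (by norm_num) (by linarith)
        have hz1 : (1:ℝ) ≤ rzeta (n + 2) := one_le_rzeta (by linarith)
        have hl : Real.log (rzeta (n + 2)) ≤ Real.log (rzeta 3) :=
          Real.log_le_log (by linarith) hz
        rw [div_eq_mul_inv]
        exact mul_le_mul_of_nonneg_right hl (by positivity)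
    · simpa [div_eq_mul_inv] using (tendsto_inv_sub m).const_mul (Real.log C)
  -- conclude
  have hexp : Tendsto (fun n : ℝ =>
      Real.exp (Real.log ((2 ^ (2 + n) - 1) * (1 + n) * rzeta (n + 2) / C) * (1 / (n - m))))
      atTop (nhds 2) := by
    have := (Real.continuous_exp.tendsto (Real.log 2)).comp hlog
    simpa [Function.comp_def, Real.exp_log (by norm_num : (0:ℝ) < 2)] using this
  have hfinal := hexp.const_mul (1/2 : ℝ)
  norm_num at hfinal
  have : Tendsto (fun n : ℝ =>
      (1 / 2 : ℝ) * (((2 ^ (2 + n) - 1) * (1 + n) * rzeta (n + 2)) / C) ^ (1 / (n - m)))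
      atTop (nhds 1) := by
    refine Tendsto.congr' ?_ (by simpa using hfinal)
    filter_upwards [eventually_ge_atTop (0:ℝ)] with n hn
    have hpos : 0 < (2 ^ (2 + n) - 1) * (1 + n) * rzeta (n + 2) / C :=
      div_pos (hnum n hn) hC
    rw [Real.rpow_def_of_pos hpos]
    norm_num
  exact this
end

section
/- Let n > m > 1 be real and A > 0, and define G(Δ) = (1/(n−m))·( m·U(n,A,Δ) − n·U(m,A,Δ) ) for Δ > 0, where U(s,A,Δ) = (2A)^{−s}·ζ(s) + (1/(2(2A)^s))·( ζ(s, Δ/(1+Δ)) + ζ(s, 1/(1+Δ)) ). Then G is differentiable in Δ, its derivative vanishes at Δ > 0 if and only if (2A)^{−n}·[ ζ(n+1, 1/(1+Δ)) − ζ(n+1, Δ/(1+Δ)) ] = (2A)^{−m}·[ ζ(m+1, 1/(1+Δ)) − ζ(m+1, Δ/(1+Δ)) ], and in particular Δ = 1 is always a stationary point of G. -/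
open Real Filter

lemma summable_hz {s q : ℝ} (hs : 1 < s) (hq : 0 < q) :
    Summable fun j : ℕ => ((j : ℝ) + q) ^ (-s) := by
  have hb : Summable fun j : ℕ => (min q 1) ^ (-s) * ((j : ℝ) + 1) ^ (-s) := by
    apply Summable.mul_left
    have h0 : Summable fun j : ℕ => ((j : ℝ)) ^ (-s) :=
      Real.summable_nat_rpow.2 (by linarith)
    have := (summable_nat_add_iff 1).2 h0
    simpa [Nat.cast_add] using this
  have hmin : 0 < min q 1 := lt_min hq one_pos
  apply hb.of_nonneg_of_le (fun j => Real.rpow_nonneg (by positivity) _)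
  intro j
  rw [← Real.mul_rpow (le_of_lt hmin) (by positivity)]
  apply Real.rpow_le_rpow_of_nonpos (by positivity) ?_ (by linarith)
  have h1 : min q 1 ≤ q := min_le_left _ _
  have h2 : min q 1 ≤ 1 := min_le_right _ _
  have h3 : (0:ℝ) ≤ (j : ℝ) := Nat.cast_nonneg j
  nlinarith

lemma hasDerivAt_hzeta {s q : ℝ} (hs : 1 < s) (hq : 0 < q) :
    HasDerivAt (fun q => hzeta s q) (-s * hzeta (s + 1) q) q := by
  have h1 : 1 < s + 1 := by linarith
  have key : HasDerivAt (fun z => ∑' j : ℕ, ((j : ℝ) + z) ^ (-s))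
      (∑' j : ℕ, (-s) * ((j : ℝ) + q) ^ (-s - 1)) q := by
    apply hasDerivAt_tsum_of_isPreconnected
      (g := fun (j : ℕ) (z : ℝ) => ((j : ℝ) + z) ^ (-s))
      (g' := fun (j : ℕ) (y : ℝ) => -s * ((j : ℝ) + y) ^ (-s - 1))
      (u := fun j : ℕ => s * ((j : ℝ) + q / 2) ^ (-(s + 1)))
      (t := Set.Ioi (q / 2)) (y₀ := q)
    · exact (summable_hz h1 (half_pos hq)).mul_left s
    · exact isOpen_Ioi
    · exact (convex_Ioi _).isPreconnected
    · intro j y hy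
      have hjy : (0:ℝ) < (j : ℝ) + y := by
        have : (0:ℝ) ≤ (j : ℝ) := Nat.cast_nonneg j
        have := hy.out
        have hq2 : 0 < q / 2 := half_pos hq
        linarith
      have h := (Real.hasDerivAt_rpow_const (x := (j : ℝ) + y) (p := -s)
        (Or.inl (ne_of_gt hjy)))
      have hi : HasDerivAt (fun z : ℝ => (j : ℝ) + z) 1 y :=
        (hasDerivAt_id y).const_add _
      have := h.comp y hi
      simpa [Function.comp_def] using this
    · intro j y hy
      have hq2 : 0 < q / 2 := half_pos hq
      have hjy : (0:ℝ) < (j : ℝ) + q / 2 := by positivity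
      have hjy' : (j : ℝ) + q / 2 ≤ (j : ℝ) + y := by
        have := hy.out; linarith
      have hb := Real.rpow_le_rpow_of_nonpos hjy hjy' (by linarith : -s - 1 ≤ 0)
      have hpos : (0:ℝ) ≤ ((j : ℝ) + q/2) ^ (-s - 1) := Real.rpow_nonneg (le_of_lt hjy) _
      rw [Real.norm_eq_abs, abs_mul, abs_neg, abs_of_pos (by linarith : (0:ℝ) < s),
        abs_of_nonneg (Real.rpow_nonneg (by linarith [hy.out] : (0:ℝ) ≤ (j:ℝ) + y) _)]
      have : (-(s + 1)) = -s - 1 := by ring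
      rw [this]
      exact mul_le_mul_of_nonneg_left hb (by linarith)
    · exact Set.mem_Ioi.2 (by linarith)
    · exact summable_hz hs hq
    · exact Set.mem_Ioi.2 (by linarith)
  have heq : (∑' j : ℕ, (-s) * ((j : ℝ) + q) ^ (-s - 1)) = -s * hzeta (s + 1) q := by
    rw [hzeta, ← tsum_mul_left]
    congr 1; ext j
    congr 1
    ring
  rw [heq] at key
  exact key

lemma hasDerivAt_U {s A : ℝ} (hs : 1 < s) (hA : 0 < A) {Δ : ℝ} (hΔ : 0 < Δ) :
    HasDerivAt (fun Δ => U s A Δ)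
      (s / (2 * (2 * A) ^ s * (1 + Δ) ^ 2) *
        (hzeta (s + 1) (1 / (1 + Δ)) - hzeta (s + 1) (Δ / (1 + Δ)))) Δ := by
  have h1Δ : (0:ℝ) < 1 + Δ := by linarith
  have hq1 : 0 < Δ / (1 + Δ) := by positivity
  have hq2 : 0 < 1 / (1 + Δ) := by positivity
  -- derivative of inner maps
  have f1 : HasDerivAt (fun Δ : ℝ => Δ / (1 + Δ)) (1 / (1 + Δ) ^ 2) Δ := by
    have := (hasDerivAt_id Δ).div ((hasDerivAt_id Δ).const_add 1) (ne_of_gt h1Δ)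
    refine this.congr_deriv ?_
    simp only [id]; ring
  have f2 : HasDerivAt (fun Δ : ℝ => 1 / (1 + Δ)) (-(1 / (1 + Δ) ^ 2)) Δ := by
    have := (hasDerivAt_const Δ (1:ℝ)).div ((hasDerivAt_id Δ).const_add 1) (ne_of_gt h1Δ)
    refine this.congr_deriv ?_
    simp only [id]; ring
  have g1 := (hasDerivAt_hzeta hs hq1).comp Δ f1
  have g2 := (hasDerivAt_hzeta hs hq2).comp Δ f2
  have hc : HasDerivAt (fun Δ : ℝ => (2 * A) ^ (-s) * rzeta s +
      (1 / (2 * (2 * A) ^ s)) * (hzeta s (Δ / (1 + Δ)) + hzeta s (1 / (1 + Δ))))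
      ((1 / (2 * (2 * A) ^ s)) *
        (-s * hzeta (s + 1) (Δ / (1 + Δ)) * (1 / (1 + Δ) ^ 2) +
         -s * hzeta (s + 1) (1 / (1 + Δ)) * (-(1 / (1 + Δ) ^ 2)))) Δ :=
    ((g1.add g2).const_mul _).const_add _
  have : HasDerivAt (fun Δ => U s A Δ)
      ((1 / (2 * (2 * A) ^ s)) *
        (-s * hzeta (s + 1) (Δ / (1 + Δ)) * (1 / (1 + Δ) ^ 2) +
         -s * hzeta (s + 1) (1 / (1 + Δ)) * (-(1 / (1 + Δ) ^ 2)))) Δ := by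
    convert hc using 2
    rfl
  convert this using 1
  have h2A : (0:ℝ) < (2 * A) ^ s := Real.rpow_pos_of_pos (by linarith) s
  field_simp
  ring

/-- For `n > m > 1` and `A > 0`, the bipartite Lennard-Jones energy
`G(Δ) = (1/(n−m))·(m·U(n,A,Δ) − n·U(m,A,Δ))` is differentiable in `Δ > 0`; its derivative
vanishes at `Δ > 0` iff
`(2A)^{−n}·[ζ(n+1,1/(1+Δ)) − ζ(n+1,Δ/(1+Δ))] = (2A)^{−m}·[ζ(m+1,1/(1+Δ)) − ζ(m+1,Δ/(1+Δ))]`,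
and in particular `Δ = 1` is always a stationary point of `G`. -/
theorem bipartite_energy_stationarity
    (n m A : ℝ) (hm : 1 < m) (hnm : m < n) (hA : 0 < A) :
    (∀ Δ : ℝ, 0 < Δ →
      DifferentiableAt ℝ (fun Δ : ℝ => (1 / (n - m)) * (m * U n A Δ - n * U m A Δ)) Δ) ∧
    (∀ Δ : ℝ, 0 < Δ →
      (deriv (fun Δ : ℝ => (1 / (n - m)) * (m * U n A Δ - n * U m A Δ)) Δ = 0 ↔
        (2 * A) ^ (-n) * (hzeta (n + 1) (1 / (1 + Δ)) - hzeta (n + 1) (Δ / (1 + Δ))) =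
          (2 * A) ^ (-m) * (hzeta (m + 1) (1 / (1 + Δ)) - hzeta (m + 1) (Δ / (1 + Δ))))) ∧
    deriv (fun Δ : ℝ => (1 / (n - m)) * (m * U n A Δ - n * U m A Δ)) 1 = 0 := by
  have hn : 1 < n := lt_trans hm hnm
  have h2A : (0:ℝ) < 2 * A := by linarith
  -- the main derivative computation
  have main : ∀ Δ : ℝ, 0 < Δ →
      HasDerivAt (fun Δ : ℝ => (1 / (n - m)) * (m * U n A Δ - n * U m A Δ))
        ((m * n / ((n - m) * 2 * (1 + Δ) ^ 2)) *
          ((2 * A) ^ (-n) * (hzeta (n + 1) (1 / (1 + Δ)) - hzeta (n + 1) (Δ / (1 + Δ))) -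
           (2 * A) ^ (-m) * (hzeta (m + 1) (1 / (1 + Δ)) - hzeta (m + 1) (Δ / (1 + Δ))))) Δ := by
    intro Δ hΔ
    have h1 := hasDerivAt_U hn hA hΔ
    have h2 := hasDerivAt_U hm hA hΔ
    have h := ((h1.const_mul m).sub (h2.const_mul n)).const_mul (1 / (n - m))
    refine h.congr_deriv ?_
    have h1Δ : (0:ℝ) < 1 + Δ := by linarith
    have hAn : (0:ℝ) < (2 * A) ^ n := Real.rpow_pos_of_pos h2A n
    have hAm : (0:ℝ) < (2 * A) ^ m := Real.rpow_pos_of_pos h2A m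
    have e1 : n - m ≠ 0 := by linarith
    have e2 : (1 + Δ) ≠ 0 := ne_of_gt h1Δ
    have e3 : (2 * A) ^ n ≠ 0 := ne_of_gt hAn
    have e4 : (2 * A) ^ m ≠ 0 := ne_of_gt hAm
    rw [Real.rpow_neg (le_of_lt h2A), Real.rpow_neg (le_of_lt h2A)]
    field_simp
  refine ⟨fun Δ hΔ => (main Δ hΔ).differentiableAt, fun Δ hΔ => ?_, ?_⟩
  · rw [(main Δ hΔ).deriv]
    have hK : (m * n / ((n - m) * 2 * (1 + Δ) ^ 2)) ≠ 0 := by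
      have h1Δ : (0:ℝ) < 1 + Δ := by linarith
      have hsq : (0:ℝ) < (1 + Δ) ^ 2 := by positivity
      have : (0:ℝ) < m * n / ((n - m) * 2 * (1 + Δ) ^ 2) := by
        apply div_pos (by nlinarith) (by nlinarith)
      exact ne_of_gt this
    rw [mul_eq_zero]
    constructor
    · rintro (h | h)
      · exact absurd h hK
      · linarith [sub_eq_zero.1 h]
    · intro h
      right
      rw [h, sub_self]
  · rw [(main 1 one_pos).deriv]
    norm_num
end
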